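/- The 4×4 matrix R = (1/√2)·[[1,0,0,1],[0,1,-1,0],[0,1,1,0],[-1,0,0,1]] satisfies the Yang–Baxter equation (R⊗I₂)(I₂⊗R)(R⊗I₂) = (I₂⊗R)(R⊗I₂)(I₂⊗R). -/

import Mathlib

open Matrix Complex

/-- The 4×4 matrix `R = (1/√2)·[[1,0,0,1],[0,1,-1,0],[0,1,1,0],[-1,0,0,1]]`. -/
noncomputable def R4 : Matrix (Fin 4) (Fin 4) ℂ :=
  ((Real.sqrt 2 : ℝ) : ℂ)⁻¹ • !![1, 0, 0, 1; 0, 1, -1, 0; 0, 1, 1, 0; -1, 0, 0, 1]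

/-- `R` as a matrix on `ℂ² ⊗ ℂ²`, indexed by pairs; `p.1` is the first tensor
factor (the paper's basis ordering makes the second factor the major index). -/
noncomputable def R : Matrix (Fin 2 × Fin 2) (Fin 2 × Fin 2) ℂ := fun p q =>
  R4 ⟨p.1.val + 2 * p.2.val, by have := p.1.isLt; have := p.2.isLt; omega⟩
     ⟨q.1.val + 2 * q.2.val, by have := q.1.isLt; have := q.2.isLt; omega⟩

/-- The operator `I₂^{⊗ i} ⊗ M ⊗ I₂^{⊗ (n-i-2)}` acting on `(ℂ²)^{⊗ n}`
(0-indexed: `M` acts on tensor factors `i` and `i+1`). -/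
noncomputable def pairOp (n i : ℕ) (M : Matrix (Fin 2 × Fin 2) (Fin 2 × Fin 2) ℂ) :
    Matrix (Fin n → Fin 2) (Fin n → Fin 2) ℂ :=
  if h : i + 1 < n then fun x y =>
    M (x ⟨i, Nat.lt_of_succ_lt h⟩, x ⟨i + 1, h⟩) (y ⟨i, Nat.lt_of_succ_lt h⟩, y ⟨i + 1, h⟩) *
      ∏ j : Fin n, if (j : ℕ) = i ∨ (j : ℕ) = i + 1 then 1 else if x j = y j then 1 else 0
  else 0

/-- Integer version of the `R` matrix (without the `1/√2` factor). -/
def R0 : Matrix (Fin 2 × Fin 2) (Fin 2 × Fin 2) ℤ := fun p q =>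
  !![1, 0, 0, 1; 0, 1, -1, 0; 0, 1, 1, 0; -1, 0, 0, 1]
    ⟨p.1.val + 2 * p.2.val, by have := p.1.isLt; have := p.2.isLt; omega⟩
    ⟨q.1.val + 2 * q.2.val, by have := q.1.isLt; have := q.2.isLt; omega⟩

/-- Integer version of `pairOp 3 0 R` (without the scalar). -/
def a0 : Matrix (Fin 3 → Fin 2) (Fin 3 → Fin 2) ℤ := fun x y =>
  R0 (x 0, x 1) (y 0, y 1) * (if x 2 = y 2 then 1 else 0)

/-- Integer version of `pairOp 3 1 R` (without the scalar). -/
def a1 : Matrix (Fin 3 → Fin 2) (Fin 3 → Fin 2) ℤ := fun x y =>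
  R0 (x 1, x 2) (y 1, y 2) * (if x 0 = y 0 then 1 else 0)

lemma key : a0 * a1 * a0 = a1 * a0 * a1 := by decide

lemma Rcast (p q : Fin 2 × Fin 2) :
    R p q = ((Real.sqrt 2 : ℝ) : ℂ)⁻¹ * ((R0 p q : ℤ) : ℂ) := by
  obtain ⟨a, b⟩ := p; obtain ⟨d, e⟩ := q
  fin_cases a <;> fin_cases b <;> fin_cases d <;> fin_cases e <;>
    norm_num [R, R4, R0, Matrix.smul_apply]

lemma p0 : pairOp 3 0 R = ((Real.sqrt 2 : ℝ) : ℂ)⁻¹ • (a0.map (Int.castRingHom ℂ)) := by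
  ext x y
  rw [pairOp]; refine (congrArg (fun M : Matrix (Fin 3 → Fin 2) (Fin 3 → Fin 2) ℂ => M x y) (dif_pos (by norm_num : 0 + 1 < 3))).trans ?_
  simp only [Fin.prod_univ_three, Rcast, a0, Matrix.map_apply, Matrix.smul_apply]
  norm_num

lemma p1 : pairOp 3 1 R = ((Real.sqrt 2 : ℝ) : ℂ)⁻¹ • (a1.map (Int.castRingHom ℂ)) := by
  ext x y
  rw [pairOp]; refine (congrArg (fun M : Matrix (Fin 3 → Fin 2) (Fin 3 → Fin 2) ℂ => M x y) (dif_pos (by norm_num : 1 + 1 < 3))).trans ?_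
  simp only [Fin.prod_univ_three, Rcast, a1, Matrix.map_apply, Matrix.smul_apply]
  norm_num
  split <;> rfl

/-- `R` satisfies the Yang–Baxter equation
`(R⊗I₂)(I₂⊗R)(R⊗I₂) = (I₂⊗R)(R⊗I₂)(I₂⊗R)` (as operators on `(ℂ²)^{⊗3}`,
`R⊗I₂ = pairOp 3 0 R` and `I₂⊗R = pairOp 3 1 R`). -/
theorem stmt0 :
    pairOp 3 0 R * pairOp 3 1 R * pairOp 3 0 R =
      pairOp 3 1 R * pairOp 3 0 R * pairOp 3 1 R := by
  rw [p0, p1]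
  simp only [smul_mul_assoc, mul_smul_comm, smul_smul,
    ← Matrix.map_mul, key]
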